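/- Let C ⊆ ℝⁿ be a measurable set, π a density with max on C attained at w, and assume exp(-ν) ≤ π(x)/π(w) ≤ 1 for all x ∈ C, where 0 ≤ ν < log(4/3). Suppose for all axis-disjoint subsets S₁, S₂ of C with vol(S₁) ≤ (2/3)vol(C) one has vol(C \ (S₁ ∪ S₂)) ≥ (ψ/4)·vol(S₁) for some ψ > 0 (the uniform cube isoperimetry). Then for axis-disjoint S₁, S₂ ⊆ C with Π(S₁) ≤ (2/3)·exp(-ν)·Π(C), one has Π(C \ (S₁ ∪ S₂)) ≥ (ψ/4)·exp(-ν)·Π(S₁). -/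

import Mathlib

open MeasureTheory

/-- Transfer of the uniform cube isoperimetric inequality to an approximately
uniform log-concave density: if `exp(-ν) ≤ π(x)/π(w) ≤ 1` on `C` with
`0 ≤ ν < log(4/3)` and the volume isoperimetry holds with constant `ψ/4`, then
for axis-disjoint `S₁, S₂ ⊆ C` with `Π(S₁) ≤ (2/3)·exp(-ν)·Π(C)` we get
`Π(C \ (S₁ ∪ S₂)) ≥ (ψ/4)·exp(-ν)·Π(S₁)`. -/
theorem stmt_16 {n : ℕ} (π : EuclideanSpace ℝ (Fin n) → ℝ)
    (hπ_meas : Measurable π) (hπ_nonneg : ∀ x, 0 ≤ π x)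
    (C : Set (EuclideanSpace ℝ (Fin n))) (hC : MeasurableSet C)
    (hC_fin : volume C ≠ ⊤) (hC_pos : 0 < volume C)
    (w : EuclideanSpace ℝ (Fin n)) (hw : w ∈ C)
    (hmax : ∀ x ∈ C, π x ≤ π w)
    (ν : ℝ) (hν0 : 0 ≤ ν) (hν1 : ν < Real.log (4 / 3))
    (hratio : ∀ x ∈ C, Real.exp (-ν) * π w ≤ π x)
    (ψ : ℝ) (hψ : 0 < ψ)
    (hcube : ∀ T₁ T₂ : Set (EuclideanSpace ℝ (Fin n)),
      MeasurableSet T₁ → MeasurableSet T₂ → T₁ ⊆ C → T₂ ⊆ C →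
      (∀ x ∈ T₁, ∀ y ∈ T₂,
        2 ≤ (Finset.univ.filter (fun i : Fin n => x i ≠ y i)).card) →
      (volume T₁).toReal ≤ 2 / 3 * (volume C).toReal →
      ψ / 4 * (volume T₁).toReal ≤ (volume (C \ (T₁ ∪ T₂))).toReal)
    (S₁ S₂ : Set (EuclideanSpace ℝ (Fin n)))
    (hS₁ : MeasurableSet S₁) (hS₂ : MeasurableSet S₂)
    (hS₁C : S₁ ⊆ C) (hS₂C : S₂ ⊆ C)
    (haxis : ∀ x ∈ S₁, ∀ y ∈ S₂,
      2 ≤ (Finset.univ.filter (fun i : Fin n => x i ≠ y i)).card)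
    (hsmall : (∫ x in S₁, π x) ≤ 2 / 3 * Real.exp (-ν) * ∫ x in C, π x) :
    ψ / 4 * Real.exp (-ν) * (∫ x in S₁, π x) ≤
      ∫ x in C \ (S₁ ∪ S₂), π x := by
  set e := Real.exp (-ν) with he
  have he_pos : 0 < e := Real.exp_pos _
  have hwpos : 0 ≤ π w := hπ_nonneg w
  -- integrability of π on C
  have hintC : IntegrableOn π C volume := by
    apply Measure.integrableOn_of_bounded (M := π w) hC_fin hπ_meas.aestronglyMeasurable
    filter_upwards [MeasureTheory.ae_restrict_mem hC] with x hx
    rw [Real.norm_eq_abs, abs_of_nonneg (hπ_nonneg x)]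
    exact hmax x hx
  have key_up : ∀ s : Set (EuclideanSpace ℝ (Fin n)), MeasurableSet s → s ⊆ C →
      (∫ x in s, π x) ≤ π w * (volume s).toReal := by
    intro s hs hsC
    have hfin : volume s ≠ ⊤ := ne_top_of_le_ne_top hC_fin (measure_mono hsC)
    calc (∫ x in s, π x) ≤ ∫ _x in s, π w := by
          refine setIntegral_mono_on (hintC.mono_set hsC)
            (integrableOn_const hfin) hs ?_
          exact fun x hx => hmax x (hsC hx)
      _ = π w * (volume s).toReal := by rw [setIntegral_const]; ring_nf; rw [measureReal_def]
  have key_lo : ∀ s : Set (EuclideanSpace ℝ (Fin n)), MeasurableSet s → s ⊆ C →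
      e * π w * (volume s).toReal ≤ ∫ x in s, π x := by
    intro s hs hsC
    have hfin : volume s ≠ ⊤ := ne_top_of_le_ne_top hC_fin (measure_mono hsC)
    calc e * π w * (volume s).toReal = ∫ _x in s, e * π w := by
          rw [setIntegral_const]; rw [smul_eq_mul]; rw [measureReal_def]; ring
      _ ≤ ∫ x in s, π x := by
          refine setIntegral_mono_on (integrableOn_const hfin)
            (hintC.mono_set hsC) hs ?_
          exact fun x hx => hratio x (hsC hx)
  have h1 : (∫ x in S₁, π x) ≤ π w * (volume S₁).toReal := key_up S₁ hS₁ hS₁C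
  have h2 : e * π w * (volume S₁).toReal ≤ ∫ x in S₁, π x := key_lo S₁ hS₁ hS₁C
  have h3 : (∫ x in C, π x) ≤ π w * (volume C).toReal := key_up C hC Set.Subset.rfl
  have hD : MeasurableSet (C \ (S₁ ∪ S₂)) := hC.diff (hS₁.union hS₂)
  have h4 : e * π w * (volume (C \ (S₁ ∪ S₂))).toReal ≤ ∫ x in C \ (S₁ ∪ S₂), π x :=
    key_lo _ hD Set.diff_subset
  rcases eq_or_lt_of_le hwpos with hw0 | hw0
  · -- π w = 0, so π = 0 on C
    have hz : ∫ x in S₁, π x = 0 := by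
      rw [setIntegral_congr_fun hS₁ (g := fun _ => (0:ℝ))
        (fun x hx => le_antisymm ((hmax x (hS₁C hx)).trans hw0.ge) (hπ_nonneg x))]
      simp
    rw [hz, mul_zero]
    exact setIntegral_nonneg hD fun x _ => hπ_nonneg x
  · have hvol_small : (volume S₁).toReal ≤ 2 / 3 * (volume C).toReal := by
      have := h2.trans (hsmall.trans (by nlinarith [h3] : 2 / 3 * e * (∫ x in C, π x) ≤ 2/3 * e * (π w * (volume C).toReal)))
      nlinarith [mul_pos he_pos hw0, this]
    have hiso := hcube S₁ S₂ hS₁ hS₂ hS₁C hS₂C haxis hvol_small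
    nlinarith [mul_le_mul_of_nonneg_left hiso (le_of_lt (mul_pos he_pos hw0)),
      mul_le_mul_of_nonneg_left h1 (by positivity : (0:ℝ) ≤ ψ/4 * e)]
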